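/- Let M = (x̃, p̃) be a single-item bid-reporting mechanism on bid space A ⊆ ℝ₊ satisfying: for all i, all a_{-i} ∈ A^{n-1}, and all a_i, a_i' ∈ A, a_i·x̃_i(a_i, a_{-i}) - p̃_i(a_i, a_{-i}) ≥ a_i·x̃_i(a_i', a_{-i}) - p̃_i(a_i', a_{-i}) (IC), allocations x̃_i ∈ [0,1] summing to at most 1, and ex-post nonnegative truthful utility (IR). Let L ≥ 1, δ = 1/(2^{L+1}-2), A = {2^{-j} : j = 1,...,L}, and let a_1, ..., a_n be i.i.d. with Pr[a_i = 2^{-j}] = δ·2^j. Then E[∑_i p̃_i(a_1,...,a_n)] ≤ 2nδ. -/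

import Mathlib

open MeasureTheory ProbabilityTheory

lemma geom_Icc (k : ℕ) : ∑ j ∈ Finset.Icc 1 k, (2:ℝ)^j = 2^(k+1) - 2 := by
  induction k with
  | zero => simp
  | succ k ih =>
    rw [Finset.sum_Icc_succ_top (by omega)] ; rw [ih]; ring

lemma single_buyer (L : ℕ) (hL : 1 ≤ L) (δ : ℝ) (hδpos : 0 ≤ δ)
    (hδ : δ * ((2:ℝ)^(L+1) - 2) ≤ 1)
    (q y : ℕ → ℝ)
    (hy0 : 0 ≤ y L) (hy1 : y 1 ≤ 1)
    (hmono : ∀ j, 1 ≤ j → j < L → y (j+1) ≤ y j)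
    (hIRL : q L ≤ ((2:ℝ)⁻¹)^L * y L)
    (hICs : ∀ j, 1 ≤ j → j < L → q j ≤ q (j+1) + ((2:ℝ)⁻¹)^j * (y j - y (j+1))) :
    ∑ j ∈ Finset.Icc 1 L, δ * 2^j * q j ≤ 2 * δ := by
  set Y : ℕ → ℝ := fun j => if j ≤ L then y j else 0 with hY
  have hYL : Y (L+1) = 0 := by simp [hY]
  have hΔ : ∀ k ∈ Finset.Icc 1 L, 0 ≤ Y k - Y (k+1) := by
    intro k hk
    simp only [Finset.mem_Icc] at hk
    rcases eq_or_lt_of_le hk.2 with h | h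
    · subst h; simpa [hY] using hy0
    · have := hmono k hk.1 h
      simp only [hY, if_pos hk.2, if_pos (by omega : k + 1 ≤ L)]
      linarith
  -- downward induction
  have key : ∀ d : ℕ, 1 ≤ L - d →
      q (L - d) ≤ ∑ k ∈ Finset.Icc (L - d) L, ((2:ℝ)⁻¹)^k * (Y k - Y (k+1)) := by
    intro d
    induction d with
    | zero =>
      intro _
      simp only [Nat.sub_zero, Finset.Icc_self, Finset.sum_singleton]
      simpa [hY, hYL] using hIRL
    | succ d ih =>
      intro h1
      have hdL : d + 1 ≤ L := by omega
      set j := L - (d+1) with hj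
      have hjL : j < L := by omega
      have hjd : j + 1 = L - d := by omega
      have h2 : q (j+1) ≤ ∑ k ∈ Finset.Icc (j+1) L, ((2:ℝ)⁻¹)^k * (Y k - Y (k+1)) := by
        rw [hjd]; exact ih (by omega)
      have h3 := hICs j (by omega) hjL
      have hsplit : Finset.Icc j L = (Finset.Ioc j L).cons j Finset.left_notMem_Ioc :=
        Finset.Icc_eq_cons_Ioc (by omega)
      rw [hsplit, Finset.sum_cons, ← Finset.Icc_add_one_left_eq_Ioc]
      have hYj : Y j = y j := by simp only [hY]; rw [if_pos (by omega : j ≤ L)]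
      have hYj1 : Y (j+1) = y (j+1) := by simp only [hY]; rw [if_pos (by omega : j+1 ≤ L)]
      rw [hYj, hYj1]
      linarith
  have hkey : ∀ j ∈ Finset.Icc 1 L,
      q j ≤ ∑ k ∈ Finset.Icc j L, ((2:ℝ)⁻¹)^k * (Y k - Y (k+1)) := by
    intro j hj
    simp only [Finset.mem_Icc] at hj
    have := key (L - j) (by omega)
    rwa [Nat.sub_sub_self hj.2] at this
  calc ∑ j ∈ Finset.Icc 1 L, δ * 2^j * q j
      ≤ ∑ j ∈ Finset.Icc 1 L, δ * 2^j *
          (∑ k ∈ Finset.Icc j L, ((2:ℝ)⁻¹)^k * (Y k - Y (k+1))) := by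
        apply Finset.sum_le_sum
        intro j hj
        exact mul_le_mul_of_nonneg_left (hkey j hj) (by positivity)
    _ = ∑ k ∈ Finset.Icc 1 L, (∑ j ∈ Finset.Icc 1 k, δ * 2^j) *
          (((2:ℝ)⁻¹)^k * (Y k - Y (k+1))) := by
        simp_rw [Finset.mul_sum]
        rw [Finset.sum_comm' (t := fun j => Finset.Icc j L) (s' := fun k => Finset.Icc 1 k)
          (t' := Finset.Icc 1 L)
          (by intro j k; simp only [Finset.mem_Icc]; omega)]
        simp_rw [Finset.sum_mul]
    _ ≤ ∑ k ∈ Finset.Icc 1 L, 2 * δ * (Y k - Y (k+1)) := by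
        apply Finset.sum_le_sum
        intro k hk
        rw [← Finset.mul_sum, geom_Icc]
        have hΔk := hΔ k hk
        have hp : ((2:ℝ)⁻¹)^k * (2:ℝ)^k = 1 := by
          rw [← mul_pow]; norm_num
        have hcoef : δ * ((2:ℝ)^(k+1) - 2) * ((2:ℝ)⁻¹)^k ≤ 2 * δ := by
          have h1 : (0:ℝ) ≤ ((2:ℝ)⁻¹)^k := by positivity
          have h2 : ((2:ℝ))^(k+1) = 2^k * 2 := by rw [pow_succ]
          have h3 : δ * ((2:ℝ)^(k+1) - 2) * ((2:ℝ)⁻¹)^k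
              = 2*δ*(((2:ℝ)⁻¹)^k * 2^k) - 2*δ*((2:ℝ)⁻¹)^k := by rw [h2]; ring
          rw [h3, hp]
          have h4 : 0 ≤ 2*δ*((2:ℝ)⁻¹)^k := by positivity
          linarith
        calc δ * ((2:ℝ)^(k+1) - 2) * (((2:ℝ)⁻¹)^k * (Y k - Y (k+1)))
            = (δ * ((2:ℝ)^(k+1) - 2) * ((2:ℝ)⁻¹)^k) * (Y k - Y (k+1)) := by ring
          _ ≤ 2 * δ * (Y k - Y (k+1)) := mul_le_mul_of_nonneg_right hcoef hΔk
    _ = 2 * δ * (Y 1 - Y (L+1)) := by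
        rw [← Finset.mul_sum]
        congr 1
        have hIcc : Finset.Icc 1 L
            = (Finset.range L).map ⟨fun i => 1 + i, add_right_injective 1⟩ := by
          ext k; simp only [Finset.mem_Icc, Finset.mem_map, Finset.mem_range,
            Function.Embedding.coeFn_mk]
          constructor
          · intro h; exact ⟨k - 1, by omega, by omega⟩
          · rintro ⟨i, hi, rfl⟩; omega
        rw [hIcc]
        · rw [Finset.sum_map]
          simp only [Function.Embedding.coeFn_mk]
          have : ∀ i, 1 + i + 1 = 1 + (i+1) := by omega
          calc ∑ i ∈ Finset.range L, (Y (1 + i) - Y (1 + i + 1))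
              = ∑ i ∈ Finset.range L, ((fun i => Y (1 + i)) i - (fun i => Y (1 + i)) (i+1)) := by
                apply Finset.sum_congr rfl; intro i _; simp [this i]
            _ = Y (1 + 0) - Y (1 + L) := Finset.sum_range_sub' (fun i => Y (1 + i)) L
            _ = Y 1 - Y (L + 1) := by norm_num [Nat.add_comm]
    _ ≤ 2 * δ := by
        rw [hYL, sub_zero]
        have : Y 1 ≤ 1 := by simp only [hY, if_pos hL]; exact hy1
        nlinarith


theorem stmt18 {Ω : Type*} [MeasurableSpace Ω] (μ : Measure Ω) [IsProbabilityMeasure μ]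
    (n L : ℕ) (hL : 1 ≤ L) (δ : ℝ) (hδ : δ = 1 / ((2:ℝ) ^ (L + 1) - 2))
    (A : Set ℝ) (hA : A = {x : ℝ | ∃ j ∈ Finset.Icc 1 L, x = ((2:ℝ)⁻¹) ^ j})
    (x p : Fin n → (Fin n → ℝ) → ℝ)
    (hx01 : ∀ i b, x i b ∈ Set.Icc (0:ℝ) 1)
    (hfeas : ∀ b, ∑ i, x i b ≤ 1)
    (hIC : ∀ (i : Fin n) (b : Fin n → ℝ), (∀ k, b k ∈ A) → ∀ b' ∈ A,
      b i * x i (Function.update b i b') - p i (Function.update b i b') ≤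
        b i * x i b - p i b)
    (hIR : ∀ (i : Fin n) (b : Fin n → ℝ), (∀ k, b k ∈ A) → 0 ≤ b i * x i b - p i b)
    (a : Fin n → Ω → ℝ) (hmeas : ∀ i, Measurable (a i))
    (hindep : iIndepFun a μ)
    (hsupp : ∀ i ω, a i ω ∈ A)
    (hprob : ∀ i, ∀ j ∈ Finset.Icc 1 L,
      μ {ω | a i ω = ((2:ℝ)⁻¹) ^ j} = ENNReal.ofReal (δ * 2 ^ j))
    (hint : Integrable (fun ω => ∑ i, p i (fun k => a k ω)) μ) :
    (∫ ω, ∑ i, p i (fun k => a k ω) ∂μ) ≤ 2 * n * δ := by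
  classical
  have hden : (2:ℝ) ≤ (2:ℝ)^(L+1) - 2 := by
    have h4 : (4:ℝ) ≤ 2^(L+1) := by
      calc (4:ℝ) = 2^2 := by norm_num
        _ ≤ 2^(L+1) := by apply pow_le_pow_right₀ (by norm_num); omega
    linarith
  have hδpos : 0 < δ := by rw [hδ]; apply div_pos one_pos; linarith
  have hδ1 : δ * ((2:ℝ)^(L+1) - 2) = 1 := by rw [hδ]; field_simp
  set v : ℕ → ℝ := fun j => ((2:ℝ)⁻¹)^j with hv
  have hvinj : Function.Injective v :=
    (pow_right_strictAnti₀ (by norm_num) (by norm_num)).injective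
  have hvA : ∀ j ∈ Finset.Icc 1 L, v j ∈ A := by
    intro j hj; rw [hA]; exact ⟨j, hj, rfl⟩
  have hw0 : ∀ j : ℕ, 0 ≤ δ * 2^j := fun j => by positivity
  set J := {j : ℕ // j ∈ Finset.Icc 1 L} with hJ
  set C : (Fin n → J) → ℝ := fun s => ∑ i, p i (fun k => v (s k)) with hC
  set E : (Fin n → J) → Set Ω := fun s => ⋂ k, a k ⁻¹' {v (s k)} with hE
  have hEm : ∀ s, MeasurableSet (E s) :=
    fun s => MeasurableSet.iInter (fun k => (hmeas k) (measurableSet_singleton _))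
  have hμE : ∀ s, (μ (E s)).toReal = ∏ k, (δ * 2^((s k : ℕ))) := by
    intro s
    have h1 : E s = ⋂ k ∈ Finset.univ, a k ⁻¹' {v (s k)} := by simp [hE]
    rw [h1, hindep.measure_inter_preimage_eq_mul Finset.univ
      (sets := fun k => {v (s k)}) (fun k _ => measurableSet_singleton _),
      ENNReal.toReal_prod]
    apply Finset.prod_congr rfl
    intro k _
    have h2 : a k ⁻¹' {v (s k)} = {ω | a k ω = v ((s k : ℕ))} := rfl
    rw [h2, hprob k (s k) (s k).2, ENNReal.toReal_ofReal (hw0 _)]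
  have keyfun : ∀ ω, ∑ i, p i (fun k => a k ω)
      = ∑ s : Fin n → J, (E s).indicator (fun _ => C s) ω := by
    intro ω
    have hchoose : ∀ k : Fin n, ∃ j ∈ Finset.Icc 1 L, a k ω = v j := by
      intro k
      have h := hsupp k ω; rw [hA] at h
      obtain ⟨j, hj, hje⟩ := h
      exact ⟨j, hj, hje⟩
    choose jf hjf1 hjf2 using hchoose
    set σ : Fin n → J := fun k => ⟨jf k, hjf1 k⟩ with hσ
    symm
    rw [Finset.sum_eq_single_of_mem σ (Finset.mem_univ σ)]
    · have hωσ : ω ∈ E σ := Set.mem_iInter.2 (fun k => hjf2 k)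
      rw [Set.indicator_of_mem hωσ]
      have harg : (fun k => v ((σ k : ℕ))) = fun k => a k ω :=
        funext fun k => (hjf2 k).symm
      simp only [hC, harg]
    · intro s _ hne
      apply Set.indicator_of_notMem
      intro hmem
      apply hne
      funext k
      have h1 : a k ω = v ((s k : ℕ)) := Set.mem_iInter.1 hmem k
      have h2 : a k ω = v ((σ k : ℕ)) := hjf2 k
      exact Subtype.ext (hvinj (h1 ▸ h2 ▸ rfl))
  have hint2 : ∀ s : Fin n → J, Integrable ((E s).indicator (fun _ => C s)) μ :=
    fun s => (integrable_const _).indicator (hEm s)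
  have hintrw : (∫ ω, ∑ i, p i (fun k => a k ω) ∂μ)
      = ∑ s : Fin n → J, (∏ k, (δ * 2^((s k : ℕ)))) * C s := by
    calc (∫ ω, ∑ i, p i (fun k => a k ω) ∂μ)
        = ∫ ω, ∑ s : Fin n → J, (E s).indicator (fun _ => C s) ω ∂μ := by
          congr 1; funext ω; exact keyfun ω
      _ = ∑ s : Fin n → J, ∫ ω, (E s).indicator (fun _ => C s) ω ∂μ :=
          integral_finset_sum _ (fun s _ => hint2 s)
      _ = ∑ s : Fin n → J, (∏ k, (δ * 2^((s k : ℕ)))) * C s := by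
          apply Finset.sum_congr rfl
          intro s _
          rw [integral_indicator_const _ (hEm s), smul_eq_mul, measureReal_def, hμE s]
  -- per-buyer bound
  have per_i : ∀ i : Fin n,
      ∑ s : Fin n → J, (∏ k, (δ * 2^((s k : ℕ)))) * p i (fun k => v ((s k : ℕ))) ≤ 2 * δ := by
    intro i
    set e := Equiv.funSplitAt i J with he
    rw [← Equiv.sum_comp e.symm
      (fun s => (∏ k, (δ * 2^((s k : ℕ)))) * p i (fun k => v ((s k : ℕ))))]
    rw [Fintype.sum_prod_type, Finset.sum_comm]
    have h1mem : (1:ℕ) ∈ Finset.Icc 1 L := by simp [hL]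
    have hsymm : ∀ (j : J) (t : {k : Fin n // k ≠ i} → J) (k : Fin n),
        (e.symm (j, t)) k = if h : k = i then j else t ⟨k, h⟩ := by
      intro j t k
      simp [he, Equiv.funSplitAt_symm_apply]
    have hT : ∀ t : {k : Fin n // k ≠ i} → J,
        ∑ j : J, (∏ k, (δ * 2^(((e.symm (j, t)) k : ℕ)))) * p i (fun k => v ((e.symm (j, t)) k))
          ≤ (∏ k' : {k : Fin n // k ≠ i}, (δ * 2^((t k' : ℕ)))) * (2 * δ) := by
      intro t
      set W := ∏ k' : {k : Fin n // k ≠ i}, (δ * 2^((t k' : ℕ))) with hW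
      have hW0 : 0 ≤ W := Finset.prod_nonneg (fun k' _ => hw0 _)
      set b0 : Fin n → ℝ := fun k => v ((e.symm (⟨1, h1mem⟩, t)) k) with hb0
      have hb0A : ∀ k, b0 k ∈ A := by
        intro k
        rw [hb0]
        exact hvA _ (e.symm (⟨1, h1mem⟩, t) k).2
      have hupd : ∀ j : J, (fun k => v (((e.symm (j, t)) k : ℕ)))
          = Function.update b0 i (v (j : ℕ)) := by
        intro j
        funext k
        by_cases hk : k = i
        · subst hk
          rw [Function.update_self, hsymm, dif_pos rfl]
        · rw [Function.update_of_ne hk, hb0]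
          simp only [hsymm, dif_neg hk]
      have hprod : ∀ j : J, (∏ k, (δ * 2^(((e.symm (j, t)) k : ℕ))))
          = (δ * 2^((j : ℕ))) * W := by
        intro j
        rw [← Finset.mul_prod_erase Finset.univ _ (Finset.mem_univ i)]
        congr 1
        · rw [hsymm, dif_pos rfl]
        · rw [Finset.prod_subtype (Finset.univ.erase i)
            (p := fun k => k ≠ i) (by simp) (fun k => δ * 2^(((e.symm (j, t)) k : ℕ)))]
          apply Finset.prod_congr rfl
          intro k' _
          rw [hsymm, dif_neg k'.2]
      -- coordinates of updates lie in A
      have hcoords : ∀ j ∈ Finset.Icc 1 L, ∀ k, Function.update b0 i (v j) k ∈ A := by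
        intro j hj k
        by_cases hk : k = i
        · subst hk; rw [Function.update_self]; exact hvA j hj
        · rw [Function.update_of_ne hk]; exact hb0A k
      set q : ℕ → ℝ := fun j => p i (Function.update b0 i (v j)) with hq
      set y : ℕ → ℝ := fun j => x i (Function.update b0 i (v j)) with hy
      have hupdi : ∀ j : ℕ, Function.update b0 i (v j) i = v j := fun j => Function.update_self ..
      have hICpair : ∀ j1 j2, j1 ∈ Finset.Icc 1 L → j2 ∈ Finset.Icc 1 L →
          v j1 * y j2 - q j2 ≤ v j1 * y j1 - q j1 := by
        intro j1 j2 hj1 hj2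
        have := hIC i (Function.update b0 i (v j1)) (hcoords j1 hj1) (v j2) (hvA j2 hj2)
        rwa [Function.update_idem, hupdi] at this
      have hsingle : ∑ j ∈ Finset.Icc 1 L, δ * 2^j * q j ≤ 2 * δ := by
        apply single_buyer L hL δ (le_of_lt hδpos) (le_of_eq hδ1) q y
        · exact (hx01 i _).1
        · exact (hx01 i _).2
        · intro j h1j hjL
          have hmem1 : j ∈ Finset.Icc 1 L := by simp; omega
          have hmem2 : j + 1 ∈ Finset.Icc 1 L := by simp; omega
          have hA1 := hICpair j (j+1) hmem1 hmem2
          have hA2 := hICpair (j+1) j hmem2 hmem1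
          have hvs : v (j+1) = v j * 2⁻¹ := pow_succ _ _
          have hvpos : 0 < v j := pow_pos (by norm_num) j
          rw [hvs] at hA2
          nlinarith [hA1, hA2, hvpos]
        · have hmemL : L ∈ Finset.Icc 1 L := by simp [hL]
          have := hIR i (Function.update b0 i (v L)) (hcoords L hmemL)
          rw [hupdi] at this
          have h2 : 0 ≤ v L * y L - q L := this
          show q L ≤ v L * y L
          linarith
        · intro j h1j hjL
          have hmem1 : j ∈ Finset.Icc 1 L := by simp; omega
          have hmem2 : j + 1 ∈ Finset.Icc 1 L := by simp; omega
          have hA1 := hICpair j (j+1) hmem1 hmem2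
          show q j ≤ q (j+1) + v j * (y j - y (j+1))
          linarith
      calc ∑ j : J, (∏ k, (δ * 2^(((e.symm (j, t)) k : ℕ)))) * p i (fun k => v ((e.symm (j, t)) k))
          = ∑ j : J, W * (δ * 2^((j:ℕ)) * q (j:ℕ)) := by
            apply Finset.sum_congr rfl
            intro j _
            rw [hprod j, hupd j]
            have hqj : p i (Function.update b0 i (v (j:ℕ))) = q (j:ℕ) := rfl
            rw [hqj]; ring
        _ = W * ∑ j : J, (δ * 2^((j:ℕ)) * q (j:ℕ)) := by rw [Finset.mul_sum]
        _ = W * ∑ j ∈ Finset.Icc 1 L, δ * 2^j * q j := by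
            rw [Finset.sum_coe_sort (Finset.Icc 1 L) (fun j => δ * 2^j * q j)]
        _ ≤ W * (2 * δ) := mul_le_mul_of_nonneg_left hsingle hW0
    have hnorm : ∑ t : {k : Fin n // k ≠ i} → J,
        ∏ k' : {k : Fin n // k ≠ i}, (δ * 2^((t k' : ℕ))) = 1 := by
      rw [← Fintype.prod_sum (fun (_ : {k : Fin n // k ≠ i}) (j : J) => δ * 2^((j:ℕ)))]
      have hone : ∑ j : J, δ * 2^((j:ℕ)) = 1 := by
        rw [Finset.sum_coe_sort (Finset.Icc 1 L) (fun j => δ * 2^j), ← Finset.mul_sum, geom_Icc]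
        exact hδ1
      simp [hone]
    calc ∑ t : {k : Fin n // k ≠ i} → J, ∑ j : J,
          (∏ k, (δ * 2^(((e.symm (j, t)) k : ℕ)))) * p i (fun k => v ((e.symm (j, t)) k))
        ≤ ∑ t : {k : Fin n // k ≠ i} → J,
            (∏ k' : {k : Fin n // k ≠ i}, (δ * 2^((t k' : ℕ)))) * (2 * δ) :=
          Finset.sum_le_sum (fun t _ => hT t)
      _ = (∑ t : {k : Fin n // k ≠ i} → J,
            ∏ k' : {k : Fin n // k ≠ i}, (δ * 2^((t k' : ℕ)))) * (2 * δ) := by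
          rw [Finset.sum_mul]
      _ = 2 * δ := by rw [hnorm, one_mul]
  -- combine
  rw [hintrw]
  have hsum : ∑ s : Fin n → J, (∏ k, (δ * 2^((s k : ℕ)))) * C s
      = ∑ i : Fin n, ∑ s : Fin n → J,
          (∏ k, (δ * 2^((s k : ℕ)))) * p i (fun k => v ((s k : ℕ))) := by
    simp_rw [hC, Finset.mul_sum]
    rw [Finset.sum_comm]
  rw [hsum]
  calc ∑ i : Fin n, ∑ s : Fin n → J,
        (∏ k, (δ * 2^((s k : ℕ)))) * p i (fun k => v ((s k : ℕ)))
      ≤ ∑ _i : Fin n, 2 * δ := Finset.sum_le_sum (fun i _ => per_i i)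
    _ = n * (2 * δ) := by rw [Finset.sum_const, Finset.card_univ, Fintype.card_fin, nsmul_eq_mul]
    _ = 2 * n * δ := by ring
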